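/- Let φ₄ := x₁³x₃ + x₂³x₁ + x₃³x₂ and φ₆ := 5x₁²x₂²x₃² − x₁⁵x₂ − x₂⁵x₃ − x₃⁵x₁ in ℂ[x₁,x₂,x₃] (the Klein PSL₂(𝔽₇)-invariants of degrees 4 and 6), and let g(u,v,w) := w³ + 3w·φ₄(u,v,1) + φ₆(u,v,1) ∈ ℂ[u,v,w]. Then the set S = {(u,v,w) ∈ ℂ³ : g = ∂g/∂u = ∂g/∂v = ∂g/∂w = 0} has exactly 21 elements, and at each point of S the determinant of the 3×3 matrix of second partial derivatives of g is nonzero. (Hence, in the affine chart x₃ = 1, the PSL₂(𝔽₇)-invariant double Veronese cone z² + y³ + 3φ₄·y + φ₆ = 0 has exactly 21 singular points, all of which are ordinary double points; this is the example attaining the sharp bound of 21 nodes for ℚ-factorial nodal double Veronese cones.) -/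

import Mathlib

open MvPolynomial


private theorem pd_ofNat' (i : Fin 3) (n : ℕ) [n.AtLeastTwo] :
    pderiv i (no_index (OfNat.ofNat n) : MvPolynomial (Fin 3) ℂ) = 0 := by
  rw [← Nat.cast_ofNat (R := MvPolynomial (Fin 3) ℂ)]
  exact Derivation.map_natCast _ _

noncomputable def klPoly : Polynomial ℂ :=
  Polynomial.X^21 + 289*Polynomial.X^14 - 57*Polynomial.X^7 - 1

theorem klPoly_natDegree : klPoly.natDegree = 21 := by
  unfold klPoly; compute_degree!

theorem klPoly_ne : klPoly ≠ 0 := by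
  intro h
  have := klPoly_natDegree
  rw [h] at this
  simp at this

theorem klPoly_deriv : Polynomial.derivative klPoly
    = 21*Polynomial.X^20 + 4046*Polynomial.X^13 - 399*Polynomial.X^6 := by
  unfold klPoly
  simp only [Polynomial.derivative_add, Polynomial.derivative_sub, Polynomial.derivative_mul,
    Polynomial.derivative_X_pow, Polynomial.derivative_ofNat, Polynomial.derivative_one,
    Nat.cast_ofNat, map_ofNat]
  ring

theorem klPoly_sep : klPoly.Separable := by
  refine ⟨Polynomial.C (941192:ℂ)⁻¹ * (36540*Polynomial.X^14 + 7038759*Polynomial.X^7 - 941192),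
    Polynomial.C (941192:ℂ)⁻¹ * (-1740*Polynomial.X^15 - 502799*Polynomial.X^8 + 116815*Polynomial.X), ?_⟩
  rw [klPoly_deriv]
  have h : (36540*Polynomial.X^14 + 7038759*Polynomial.X^7 - 941192) * klPoly
      + (-1740*Polynomial.X^15 - 502799*Polynomial.X^8 + 116815*Polynomial.X) * (21*Polynomial.X^20 + 4046*Polynomial.X^13 - 399*Polynomial.X^6)
      = Polynomial.C (941192:ℂ) := by
    unfold klPoly
    rw [show (Polynomial.C (941192:ℂ)) = ((941192 : Polynomial ℂ)) by simp [map_ofNat]]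
    ring
  calc Polynomial.C (941192:ℂ)⁻¹ * (36540*Polynomial.X^14 + 7038759*Polynomial.X^7 - 941192) * klPoly +
      Polynomial.C (941192:ℂ)⁻¹ * (-1740*Polynomial.X^15 - 502799*Polynomial.X^8 + 116815*Polynomial.X) *
        (21*Polynomial.X^20 + 4046*Polynomial.X^13 - 399*Polynomial.X^6)
      = Polynomial.C (941192:ℂ)⁻¹ * ((36540*Polynomial.X^14 + 7038759*Polynomial.X^7 - 941192) * klPoly
        + (-1740*Polynomial.X^15 - 502799*Polynomial.X^8 + 116815*Polynomial.X) * (21*Polynomial.X^20 + 4046*Polynomial.X^13 - 399*Polynomial.X^6)) := by ring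
    _ = Polynomial.C (941192:ℂ)⁻¹ * Polynomial.C (941192:ℂ) := by rw [h]
    _ = 1 := by rw [← Polynomial.C_mul]; norm_num

theorem klPoly_card : (klPoly.rootSet ℂ).ncard = 21 := by
  have h1 : Fintype.card (klPoly.rootSet ℂ) = 21 := by
    rw [Polynomial.card_rootSet_eq_natDegree klPoly_sep (IsAlgClosed.splits _),
      klPoly_natDegree]
  rw [Set.ncard_eq_toFinset_card', Set.toFinset_card, h1]

theorem kl_forward (x y z : ℂ)
    (h1 : (-x^5*y + 3*x^3*z + 5*x^2*y^2 + 3*x*y^3*z - x - y^5 + 3*y*z + z^3) = 0)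
    (h2 : (-5*x^4*y + 9*x^2*z + 10*x*y^2 + 3*y^3*z - 1) = 0)
    (h3 : (-x^5 + 10*x^2*y + 9*x*y^2*z - 5*y^4 + 3*z) = 0)
    (h4 : (3*x^3 + 3*x*y^3 + 3*y + 3*z^2) = 0) :
    (x^21 + 289*x^14 - 57*x^7 - 1) = 0 ∧ y = (-(9/98)*x^17 - (1301/49)*x^10 + (213/98)*x^3) ∧ z = ((16/49)*x^19 + (4625/49)*x^12 - (626/49)*x^5) := by
  refine ⟨?_, ?_, ?_⟩
  · linear_combination ((35/2)*x^13 - 9*x^12*y*z + 5*x^11*y^3 + (65/2)*x^10*y + (311/12)*x^10*z^2 + 6*x^9*y^2*z + (15/2)*x^8*y^4 - 27*x^8*y^3*z^2 - (4063/18)*x^8*z + 24*x^7*y^5*z + (315/2)*x^7*y^2 + (59/4)*x^7*y*z^2 - (583/72)*x^7*z^4 - 5*x^6*y^7 + 165*x^6*y^3*z - 30*x^6*y^2*z^3 + (560765/108)*x^6 + 5*x^5*y^5 - (851/12)*x^5*y^4*z^2 - (15025/6)*x^5*y*z - (5459/108)*x^5*z^3 + (243/2)*x^4*y^6*z - 81*x^4*y^5*z^3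 + 2285*x^4*y^3 + (2009/12)*x^4*y^2*z^2 - (3031/24)*x^4*y*z^4 + (2915/432)*x^4*z^6 + 10*x^3*y^8 - (32101425192251718425781731209050135518258017/28998143385619728138796882200143594880)*x^3*y^7*z^2 - (91099511640659960874978262928635923444971767/22554111522148677441286463933445018240)*x^3*y^6*z^4 - (25713066929506944050220386682404611243806979/7831288722968290778224466643557298000)*x^3*y^5*z^6 + (3325261196012573308590906346474132240228129/828518382446277946822768062861245568)*x^3*y^4*z + (1036496941600144118703837638558046280105888/75515998400051375361450214062873945)*x^3*y^3*z^3 - (4968742824991737730323671528008662593268678967/2537337546241726212144727192512564552000)*x^3*y^2*z^5 + (1420401722276637415352693938476491712078803/596669616988060249769483172842460800)*x^3*y*z^7 - (19847705/432)*x^3*y + (87085094549800093695128826694378377223147/104417182972910543709659555247430640)*x^3*z^9 - (13376491767279111982853071296456664678933559/36247679232024660173496102750179493600)*x^3*z^2 - (3182189829663931946007906046541132442979465/828518382446277946822768062861245568)*x^2*y^9*z - (649164365849326555246930841164478301643605187/338311672832230161619296959001675273600)*x^2*y^8*z^3 - (13192569351571628358227331840665884928216683/11746933084452436167336699965335947000)*x^2*y^7*z^5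 + (17128105/432)*x^2*y^6 - (3878127528709523267629595508423617546354020189/144990716928098640693984411000717974400)*x^2*y^5*z^2 + (13484534238875532756722904178269488538864726007/1014935018496690484857890877005025820800)*x^2*y^4*z^4 + (1155751870706842195696965952814936279642545877/169155836416115080809648479500837636800)*x^2*y^3*z^6 - (3668938209942039006815377013616937683190001/1678133297778919452476671423619421000)*x^2*y^2*z^8 + (3971643319379134372680004244476970183075107/3106943934173542300585380235729670880)*x^2*y^2*z - (162655060030056923406829991176162261134036023/169155836416115080809648479500837636800)*x^2*y*z^3 - (290553204363089936664634486551654478904014781/507467509248345242428945438502512910400)*x^2*z^5 + (1127389595069818410131978095634903096658733733/101493501849669048485789087700502582080)*x*y^10*z^2 + (2687877738181500032024948765600130519753601273/281926394026858468016080799168062728000)*x*y^9*z^4 + (7674926611653897795094426228898658931100477/2796888829631532420794452372699035000)*x*y^8*z^6 + (703274623026550223455195082201186093180405573/28998143385619728138796882200143594880)*x*y^7*z - (2223815726345506801724612423165377580535404549/40275199146694066859440114166866104000)*x*y^6*z^3 - (299582230185425763713806083385592603474924291411/25373375462417262121447271925125645520000)*x*y^5*z^5 - (45974227355179551013035845846037781328363027/7458370212350753122118539660530760000)*x*y^4*z^7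 - (557079971/2160)*x*y^4 - (120526534098578055291319711545539818007467/22375110637052259366355618981592280)*x*y^3*z^9 - (12756526500601167002601228975045419075101233977/5074675092483452424289454385025129104000)*x*y^3*z^2 - (174604835239856734494747197736438664243134236677/12686687731208631060723635962562822760000)*x*y^2*z^4 - (184948429453082725450480827233564811982350709/241651194880164401156640685001196624000)*x*y*z^6 - (12202310021402158335353152118379888141363149/4698773233780974466934679986134378800)*x*z^8 + (9187047679920373802641941744268590994019909/271857594240184951301220770626346202000)*x*z - (15910961576095396424208732574226605133580845/5799628677123945627759376440028718976)*y^12*z - (318888849315371366838787157178688067914157389/67662334566446032323859391800335054720)*y^11*z^3 - (7674926611653897795094426228898658931100477/4698773233780974466934679986134378800)*y^10*z^5 + (12259355/432)*y^9 + (10110105029434373072708860653955788444614354627/202987003699338096971578175401005164160)*y^8*z^2 + (707628509772928727184788037142173144107257097/2537337546241726212144727192512564552000)*y^7*z^4 + (1123906918996398372593622926096052323745066731/62650309783746326225795733148458384000)*y^6*z^6 + (179790277970098701034192684700003903541255607/23493866168904872334673399930671894000)*y^5*z^8 - (1189708713497378799269310432486327676238555/271857594240184951301220770626346202)*y^5*z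 - (5566954775727298312359121293295455905204644801/211444795520143851012060599376047046000)*y^4*z^3 - (47811216125922226314309899411837651194396154351/1691558364161150808096484795008376368000)*y^3*z^5 - (639900019928361867248853145741482107887348613/14916740424701506244237079321061520000)*y^2*z^7 + (2503747/90)*y^2 - (399363588876554933822064705813838542453907/62650309783746326225795733148458384)*y*z^9 + (1075795391147375236425386108959496577498453761/2537337546241726212144727192512564552000)*y*z^2 + (2610566018168115216752521704/4075601308734385508029)*z^11 - (132621918560355651460161514472879496202231451/93975464675619489338693599722687576000)*z^4) * h1 + (-(11/2)*x^14 - (127/12)*x^11*z^2 + (1385/18)*x^9*z - (13/72)*x^8*z^4 - (177871/108)*x^7 + (4429/108)*x^6*z^3 - (583/432)*x^5*z^6 - (17/2)*x^4*y^8 + (32104296008446894778867472100387949734151137/144990716928098640693984411000717974400)*x^4*y^7*z^2 + (91099511640659960874978262928635923444971767/112770557610743387206432319667225091200)*x^4*y^6*z^4 + (25713066929506944050220386682404611243806979/39156443614841453891122333217786490000)*x^4*y^5*z^6 - (3323987993402748503352736091619309745024993/4142591912231389734113840314306227840)*x^4*y^4*z - (1036526543871516938842979327041958926692328/377579992000256876807251070314369725)*x^4*y^3*z^3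 + (4968611306328924200848342026315850692006066967/12686687731208631060723635962562822760000)*x^4*y^2*z^5 - (1420401722276637415352693938476491712078803/2983348084940301248847415864212304000)*x^4*y*z^7 + (4776025/432)*x^4*y - (87085094549800093695128826694378377223147/522085914864552718548297776237153200)*x^4*z^9 + (13079100703659901660514636979451379538650159/181238396160123300867480513750897468000)*x^4*z^2 + (3182157517447016541167979958586680854402313/4142591912231389734113840314306227840)*x^3*y^9*z + (649164365849326555246930841164478301643605187/1691558364161150808096484795008376368000)*x^3*y^8*z^3 + (13192569351571628358227331840665884928216683/58734665422262180836683499826679735000)*x^3*y^7*z^5 - (3436637/432)*x^3*y^6 + (3878209037657556347082105643326668449975295389/724953584640493203469922055003589872000)*x^3*y^5*z^2 - (13484839635641862351158382597795187342814832007/5074675092483452424289454385025129104000)*x^3*y^4*z^4 - (1155751870706842195696965952814936279642545877/845779182080575404048242397504188184000)*x^3*y^3*z^6 + (3668938209942039006815377013616937683190001/8390666488894597262383357118097105000)*x^3*y^2*z^8 - (3955246077550540817239520390796213986153587/15534719670867711502926901178648354400)*x^3*y^2*z + (162805838964355721096499458122237327215349223/845779182080575404048242397504188184000)*x^3*y*z^3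 + (290356095524706058566721043660916127847733581/2537337546241726212144727192512564552000)*x^3*z^5 + x^2*y^11 - (861816052884094329116576470420871432390363257/507467509248345242428945438502512910400)*x^2*y^10*z^2 - (7995791350840723287823211094583230918589333/5753599878099152408491444880980872000)*x^2*y^9*z^4 - (7674926611653897795094426228898658931100477/19578221807420726945561166608893245000)*x^2*y^8*z^6 - (442437652892906728247433457640745065808644563/144990716928098640693984411000717974400)*x^2*y^7*z + (379647345879588148588521528613088347576299457/60412798720041100289160171250299156000)*x^2*y^6*z^3 + (2017704459463126212726398912889590773163079749/8457791820805754040482423975041881840000)*x^2*y^5*z^5 + (7168050512417672569454805258242869832479499/156625774459365815564489332871145960000)*x^2*y^4*z^7 + (8196389/240)*x^2*y^4 + (120526534098578055291319711545539818007467/156625774459365815564489332871145960)*x^2*y^3*z^9 + (2832938124479943880751131907979536247398805599/1014935018496690484857890877005025820800)*x^2*y^3*z^2 + (3645242442714965334351410419224708288279613249/704815985067146170040201997920156820000)*x^2*y^2*z^4 + (676257967017759433105839012668768642961124627/1691558364161150808096484795008376368000)*x^2*y*z^6 + (14903235660808777593944233978801343725752449/15858359664010788825904544953203528450)*x^2*z^8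 - (12029575582096067643172433831894854307342909/271857594240184951301220770626346202000)*x^2*z + (3182192315219079284841746514845321026716169/7249535846404932034699220550035898720)*x*y^12*z + (318888849315371366838787157178688067914157389/422889591040287702024121198752094092000)*x*y^11*z^3 + (7674926611653897795094426228898658931100477/29367332711131090418341749913339867500)*x*y^10*z^5 - (2456191/540)*x*y^9 - (22874214021794240787263462052599028263838615151/2537337546241726212144727192512564552000)*x*y^8*z^2 - (21969412095402022743062392810032161021006387237/8457791820805754040482423975041881840000)*x*y^7*z^4 - (8182560247530599368302944812551682722383681591/1691558364161150808096484795008376368000)*x*y^6*z^6 - (2019102843210619027980832951762599403495181/1864592553087688280529634915132690000)*x*y^5*z^8 + (821698538420329457604571249330427394945630761/271857594240184951301220770626346202000)*x*y^5*z + (419738823279612267312894956769368248047564823/187950929351238978677387199445375152000)*x*y^4*z^3 + (7019716147509151140652501687173557901517470121/1268668773120863106072363596256282276000)*x*y^3*z^5 + (13785693509724196698956168385415755678116417077/1585835966401078882590454495320352845000)*x*y^2*z^7 - (2502847/90)*x*y^2 + (1034228250049788487564453602574899367787993/12530061956749265245159146629691676800)*x*y*z^9 + (454203520247855767309845041015140049348398499/2537337546241726212144727192512564552000)*x*y*z^2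 - (220850852744911940079892366099024140360427/939754646756194893386935997226875760)*x*z^11 + (668532125118624284957671209963994244065728779/7612012638725178636434181577537693656000)*x*z^4 - (3182241197803643615240609058161029840204681/1380863970743796578037946771435409280)*y^10*z + (3256714129421455990072332485770007508011531191/1691558364161150808096484795008376368000)*y^9*z^3 + (4747993812726583656128302353900918366567521/7831288722968290778224466643557298000)*y^8*z^5 - (414528548247965938401261368984291735264241/652607393580690898185372220296441500)*y^7*z^7 + (16762129/720)*y^7 - (3541864305064492175434074642228909004141157231/724953584640493203469922055003589872000)*y^6*z^2 - (2236813624920046215758783288868518053608175147/338311672832230161619296959001675273600)*y^5*z^4 - (125594967406050881584369542768345828320338333/42288959104028770202412119875209409200)*y^4*z^6 - (3705391853142552513665341779435933959847637/978911090371036347278058330444662250)*y^3*z^8 + (56064741813189503840411707/3992425771821438865008)*y^3*z - (134858579619482895975401519338894721200747/93229627654384414026481745756634500)*y^2*z^10 + (19140949349669347295158681243590360439035943/33831167283223016161929695900167527360)*y^2*z^3 + (323929221719449220758019680820243125893603353/317167193280215776518090899064070569000)*y*z^5 - (6794972059289657784534450060638647421470703/56385278805371693603216159833612545600)*z^7 +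 1) * h2 + (-x^16 - 301*x^9 - (188369/54)*x^2 - (66393385546431020253850406303507916067092619/25373375462417262121447271925125645520)*x*y^11*z^2 - (22778401788297588328383188982101217021850459/8810199813339327125502524974001960250)*x*y^10*z^4 - (7674926611653897795094426228898658931100477/9789110903710363472780583304446622500)*x*y^9*z^6 - (26082548686886278979541866099508977050818853/2899814338561972813879688220014359488)*x*y^8*z + (18850114625194177368635163782097326147372843/839066648889459726238335711809710500)*x*y^7*z^3 + (73166161289293961670844722369295122613383104863/12686687731208631060723635962562822760000)*x*y^6*z^5 + (19531557224282221951324341006116774305116161/9789110903710363472780583304446622500)*x*y^5*z^7 + (100847183/1080)*x*y^5 + (120526534098578055291319711545539818007467/78312887229682907782244666435572980)*x*y^4*z^9 - (467266992908461463512073283884014002233867659/70481598506714617004020199792015682000)*x*y^4*z^2 + (55474424501893029540634245464691267388065984067/12686687731208631060723635962562822760000)*x*y^3*z^4 - (210479840824547505648540868236480735557804887/58734665422262180836683499826679735000)*x*y^2*z^6 + (1914968871687824156480112128929601822472272969/2537337546241726212144727192512564552000)*x*y*z^8 + (22727885292097509593951013948841358553826693/135928797120092475650610385313173101000)*x*y*z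 + (261255283649400281085386480083135131669441/261042957432276359274148888118576600)*x*z^10 - (13665450546703642790726700834892546952576159/30206399360020550144580085625149578000)*x*z^3 + (3182192315219079284841746514845321026716169/5799628677123945627759376440028718976)*y^13*z + (318888849315371366838787157178688067914157389/338311672832230161619296959001675273600)*y^12*z^3 + (7674926611653897795094426228898658931100477/23493866168904872334673399930671894000)*y^11*z^5 - (2451871/432)*y^10 - (1606249271257224150832937848104979679420676241/126866877312086310607236359625628227600)*y^9*z^2 - (4342691411060307144588291299696641043254230287/2537337546241726212144727192512564552000)*y^8*z^4 - (2990867474829227265484853019321518618136128213/604127987200411002891601712502991560000)*y^7*z^6 - (13146699711957425567850052184740035280264801/5873466542226218083668349982667973500)*y^6*z^8 + (593188842101589182080714087142473060454846287/434972150784295922081953233002153923200)*y^6*z + (4556367380017711745119174617618251429615127503/187950929351238978677387199445375152000)*y^5*z^3 + (54128516718770565867582761416933949957952370873/5074675092483452424289454385025129104000)*y^4*z^5 + (187428975237300353954548332109296179611302117569/12686687731208631060723635962562822760000)*y^3*z^7 - (2452807/240)*y^3 + (609821035015911737964760605982180548423266217/104417182972910543709659555247430640000)*y^2*z^9 - (1150341577426356879971321079475795528640122193/1268668773120863106072363596256282276000)*y^2*z^2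 + (100461670369311278333605180634842953536875/187950929351238978677387199445375152)*y*z^11 - (695350030920619003526825923364047530362923703/3806006319362589318217090788768846828000)*y*z^4 - (290872525943897841017945667001492192085694581/422889591040287702024121198752094092000)*z^6) * h3 + ((54069466441331211663749467809/2328915033562506004588)*y^3*z^6 + (214998609773031642094533520995/16302405234937542032116)*y^2*z^8 - (1074582733288282502065117/83175536912946643021)*y^2*z + (9482257031969920537629634931/8151202617468771016058)*y*z^10 + (224568783054251549339160897/332702147651786572084)*y*z^3 - (870188672722705072250840568/4075601308734385508029)*z^12 + (2603877963113590208475685485/2328915033562506004588)*z^5) * h4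
  · linear_combination ((45/28)*x^9 - (81/98)*x^8*y*z + (45/98)*x^7*y^3 + (585/196)*x^6*y + (933/392)*x^6*z^2 + (27/49)*x^5*y^2*z + (135/196)*x^4*y^4 - (243/98)*x^4*y^3*z^2 + (155182516587182858452581871481/5920096832880298579792924720)*x^4*z + (5450538422459142461818431591785/2368038733152119431917169888)*x^3*y^5*z - (61848916371164009538599597888367/5920096832880298579792924720)*x^3*y^4*z^3 + (138733244558510189849775/262778124473133976469)*x^3*y^3*z^5 + (2560982954388432852081170719525/1014873742779479756535929952)*x^3*y^2 + (167012329557528111439821257484477/11840193665760597159585849440)*x^3*y*z^2 + (3648386984576579581899859110345/2368038733152119431917169888)*x^3*z^4 - (3068661209301626990100600313285/1014873742779479756535929952)*x^2*y^7 - (21183954823895822185709886273631/5920096832880298579792924720)*x^2*y^6*z^2 + (231222074264183649749625/1051112497892535905876)*x^2*y^5*z^4 - (836784748211108754580331555003/48327321084737131263615712)*x^2*y^3*z + (40269050733325853961151459501549/1776029049864089573937877416)*x^2*y^2*z^3 + (102723643600903284972367401/10511124978925359058760)*x^2*y*z^5 + (2625796041630668378684183497751/8880145249320447869689387080)*x^2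 + (13037872242652232697467344847979/1184019366576059715958584944)*x*y^8*z + (1846415681302368314411147962944/168184569115917573289571725)*x*y^7*z^3 + (133117404781965212134665561981997/7104116199456358295751509664)*x*y^5 - (4833651834805448376855986358394507/59200968328802985797929247200)*x*y^4*z^2 - (51416176853682760640326383789419/1850030260275093306185288975)*x*y^3*z^4 - (2846806178340629095717383/525556248946267952938)*x*y^2*z^6 - (39146740410027947522807466076183/5381906211709362345266295200)*x*y*z - (93994897785042908537900919057599/3229143727025617407159777120)*x*z^3 - (15343306046508134950503001566425/7104116199456358295751509664)*y^10 - (683821329903424154110198729187/107638124234187246905325904)*y^9*z^2 + (70674341583247785477701552647819/2368038733152119431917169888)*y^6*z + (1629129139442454159401564436517651/35520580997281791478757548320)*y^5*z^3 + (1764540844278361676253956877/115622374768178949646360)*y^4*z^5 + (1198655232985528040302056/262778124473133976469)*y^3*z^7 - (53718981799113177732534450809/296004841644014928989646236)*y^3 - (81839212149246949526404175117625/1184019366576059715958584944)*y^2*z^2 - (7455955680785748875134957014438841/59200968328802985797929247200)*y*z^4 - (701545133962895859140179605/23124474953635789929272)*z^6) * h1 + (-(99/196)*x^10 - (381/392)*x^7*z^2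 - (68737020996859314904789266641/29600484164401492898964623600)*x^5*z - (5445319071781990851641961094889/11840193665760597159585849440)*x^4*y^5*z + (61848916371164009538599597888367/29600484164401492898964623600)*x^4*y^4*z^3 - (27746648911702037969955/262778124473133976469)*x^4*y^3*z^5 - (509260706121788789691969489401/1014873742779479756535929952)*x^4*y^2 - (166996290927843114304383145020057/59200968328802985797929247200)*x^4*y*z^2 - (3650344241080511435716035546681/11840193665760597159585849440)*x^4*z^4 + (613639039169661976409825946641/1014873742779479756535929952)*x^3*y^7 + (21183954823895822185709886273631/29600484164401492898964623600)*x^3*y^6*z^2 - (46244414852836729949925/1051112497892535905876)*x^3*y^5*z^4 + (837517055066321352946928180843/241636605423685656318078560)*x^3*y^3*z - (40273943874585683595691900592389/8880145249320447869689387080)*x^3*y^2*z^3 - (45954449218243494697517589022011/29600484164401492898964623600)*x^3*y*z^5 + (35145755288155914761943/525556248946267952938)*x^3*z^7 - (1530910909352406503600122050251/8880145249320447869689387080)*x^3 - (10062058449005590919161803840789/5920096832880298579792924720)*x^2*y^8*z - (2117236393301798746966597850061/1345476552927340586316573800)*x^2*y^7*z^3 - (83287016057236142247307205471819/35520580997281791478757548320)*x^2*y^5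 + (660352308082216649819169499882939/59200968328802985797929247200)*x^2*y^4*z^2 + (17834914000934657055579336625919/14800242082200746449482311800)*x^2*y^3*z^4 + (2501514547439448178757943/2102224995785071811752)*x^2*y^2*z^6 + (141421272303823789563606612092833/59200968328802985797929247200)*x^2*y*z + (116469455698233334963754245099519/11840193665760597159585849440)*x^2*z^3 + (613732241860325398020120062657/1776029049864089573937877416)*x*y^10 + (683821329903424154110198729187/672738276463670293158286900)*x*y^9*z^2 - (109337446400963811101997786284401/29600484164401492898964623600)*x*y^6*z - (4760236146689780299993866433331/338291247593159918845309984)*x*y^5*z^3 - (7115732200444407218081946735179/4228640594914498985566374800)*x*y^4*z^5 - (199775872164254673383676/262778124473133976469)*x*y^3*z^7 + (445139883136689522314044793373/296004841644014928989646236)*x*y^3 + (780312171862313546149543762473543/59200968328802985797929247200)*x*y^2*z^2 + (118053233032539059033611843389139/5381906211709362345266295200)*x*y*z^4 + (48155906010371694558889827649333/7104116199456358295751509664)*x*z^6 - (613840978332766056565463198009/338291247593159918845309984)*y^8 + (14836686422319155344444179580053/5920096832880298579792924720)*y^7*z^2 - (130430779058154361014493911/115622374768178949646360)*y^6*z^4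 + (66591957388084891127892/262778124473133976469)*y^5*z^6 - (29846995503209904860707252973907/11840193665760597159585849440)*y^4*z - (40652361454972937537549736884857/5920096832880298579792924720)*y^3*z^3 - (33166279072299290144010919444569/2960048416440149289896462360)*y^2*z^5 - (17271364059237461901697989/10511124978925359058760)*y*z^7 + (1012305823181489144234/8427286790683596913)*y - (579564660045251476770283424571/264290037182156186597898425)*z^2) * h2 + (-(9/98)*x^12 - (1355/49)*x^5 - (11901766777944455271189123304011/5920096832880298579792924720)*x^2*y^2*z^5 - (175728776440779573809715/525556248946267952938)*x^2*y*z^7 + (1273310993677874068278282072727/4440072624660223934844693540)*x^2*y + (833711122700211633465378060423/14800242082200746449482311800)*x^2*z^2 - (1487906896823320889152770503595/592009683288029857979292472)*x*y^9*z - (597877640558564682922313493321/192210936132477226616653400)*x*y^8*z^3 - (24913563315277925065499031224809/3552058099728179147875754832)*x*y^6 + (121061736081378263206002511266013/4228640594914498985566374800)*x*y^5*z^2 + (17076011963912096403614449190082/1850030260275093306185288975)*x*y^4*z^4 + (616592198037823065999/6128935847769888664)*x*y^3*z^6 - (3697643141058791213062383120149/2114320297457249492783187400)*x*y^2*z - (278518297370075916714897031076177/88801452493204478696893870800)*x*y*z^3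 + (10950443734015814073360831323553/5920096832880298579792924720)*x*z^5 + (3068661209301626990100600313285/7104116199456358295751509664)*y^11 + (683821329903424154110198729187/538190621170936234526629520)*y^10*z^2 - (23959911741360595156494670264787/2960048416440149289896462360)*y^7*z - (990185903678380984004680802712463/88801452493204478696893870800)*y^6*z^3 - (29598628740287172360321676362901/5920096832880298579792924720)*y^5*z^5 - (199775872164254673383676/262778124473133976469)*y^4*z^7 + (945327740544453563563703598507/2368038733152119431917169888)*y^4 + (183971743123823888785077359954283/7400121041100373224741155900)*y^3*z^2 + (2847060086813324082175221094712431/59200968328802985797929247200)*y^2*z^4 + (2094108022950534030610747266268261/177602904986408957393787741600)*y*z^6 + (316311797593403232857487/525556248946267952938)*z^8 - (203858700257346176614753749882/264290037182156186597898425)*z) * h3 + (-(27295921779020506399234075/5781118738408947482318)*y^4*z^6 - (399551744328509346767352/262778124473133976469)*y^3*z^8 - (145335720612880583244163/58991007534785178391)*y^3*z + (154231449651424129528562807/3303496421947969989896)*y^2*z^3 + (20840692580434931992499483/412937052743496248737)*y*z^5 + (219930658893522210800997107/23124474953635789929272)*z^7 + (340244369990724247049/8427286790683596913)) * h4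
  · linear_combination (-(40/7)*x^11 + (144/49)*x^10*y*z - (80/49)*x^9*y^3 - (520/49)*x^8*y - (1244/147)*x^8*z^2 - (96/49)*x^7*y^2*z - (120/49)*x^6*y^4 + (432/49)*x^6*y^3*z^2 + (32504/441)*x^6*z - (384/49)*x^5*y^5*z - (360/7)*x^5*y^2 - (236/49)*x^5*y*z^2 + (1166/441)*x^5*z^4 + (80/49)*x^4*y^7 - (2640/49)*x^4*y^3*z + (480/49)*x^4*y^2*z^3 - (135278257252581076474544301243172470675/11532867597725641085653432793961152)*x^4*z^7 + (3706345431924984349830264595848245948843865036907/877534347237885120037211003676218257387795440)*x^4 + (41011738326885222898332572380614834445625353208230871/1213103481621652389939440491482004119012888416256)*x^3*y^8*z + (152515952808510411645227492507012670480007514723365/2808109911161232384119075211763898423640945408)*x^3*y^7*z^3 - (984802654784724011634551036527130723643869446083439/24757213910645967141621234520040900388018130944)*x^3*y^5 - (46868089402173443623005651600142123460571006115681321/404367827207217463313146830494001373004296138752)*x^3*y^4*z^2 + (197903145795084245715855657612515152353893818754028301/4332512434363044249783716041007157567903172915200)*x^3*y^3*z^4 - (16465491302555099169900351107426403943113246016285/936036637053744128039691737254632807880315136)*x^3*y^2*z^6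 + (31930203196444387105715916741531973975/1441608449715705135706679099245144)*x^3*y*z^8 + (15717517487266544956201012485125607891471570981393577/151637935202706548742430061435250514876611052032)*x^3*y*z + (1251534033401784545675720045509297767/360402112428926283926669774811286)*x^3*z^10 + (3103709958435349121162322614832118606094577091975597/7200281823490339446459167209651021599079347200)*x^3*z^3 - (664991675058786084811669354668795710880498760481015/173300497374521769991348641640286302716126916608)*x^2*y^10 + (762579764042552058226137462535063352400037573616825/33697318933934788609428902541166781083691344896)*x^2*y^9*z^2 - (274539163048705689326069915154921824417620354205832221/1213103481621652389939440491482004119012888416256)*x^2*y^6*z + (3828867044854264026714503468831790361764380780658097993/15163793520270654874243006143525051487661105203200)*x^2*y^5*z^3 + (556968785004193585693861110729318762073476105169021/4813902704847826944204128934452397297670192128)*x^2*y^4*z^5 - (65608491583525070905182367980722201855/17299301396588461628480149190941728)*x^2*y^3*z^7 + (2282270006336403594079379352426511301130609099100555/129975373030891327493511481230214727037095187456)*x^2*y^3 - (30453994812776757278109187774059578997/720804224857852567853339549622572)*x^2*y^2*z^9 - (1581125515834047352037248537192022794440730302868571327/1010919568018043658282867076235003432510740346880)*x^2*y^2*z^2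 - (742631643975677614250872078187497854988345317260101/1480839210963931140062793568703618309341904805)*x^2*y*z^4 - (1087422149958803643453766223054820705191040824565649/561621982232246476823815042352779684728189081600)*x^2*z^6 + (2732182392038837876482805981623190724462379266805111/75818967601353274371215030717625257438305526016)*x*y^11*z - (1202040470707269660598736495252000909319595622199031/173300497374521769991348641640286302716126916608)*x*y^8 - (281774204210675392501218927984906542850744217825506761/2021839136036087316565734152470006865021480693760)*x*y^7*z^2 + (1495801629550116980716710480204360552909676905493866217/5415640542953805312229645051258946959878966144000)*x*y^6*z^4 + (710302278639399825144778996493594292404348857868719/4212164866741848576178612817645847635461418112)*x*y^5*z^6 + (78409555995931951958013061500744068199/2883216899431410271413358198490288)*x*y^4*z^8 + (770129778729378870664046460152568533181579930262870559/466578262162173996130554035185386199620341698560)*x*y^4*z - (129704460969198245737887200475089388189262363553439096989/151637935202706548742430061435250514876611052032000)*x*y^3*z^3 - (178919464769381414386447258560343563174369243332034887/8424329733483697152357225635291695270922836224000)*x*y^2*z^5 + (3828933905582385753582767677623571421747/34598602793176923256960298381883456)*x*y*z^7 - (783429199756796659153505518913987055576501804804113/17496684831081524854895776319451982485762813696)*x*y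 - (17938654478758911821351987318966601327/720804224857852567853339549622572)*x*z^9 - (358513293535678076542417373009508190830257633967161483/2106082433370924288089306408822923817730709056000)*x*z^2 - (3324958375293930424058346773343978554402493802405075/1213103481621652389939440491482004119012888416256)*y^13 - (256488889079657640695646111700193607587470390120602121/1213103481621652389939440491482004119012888416256)*y^9*z - (28570217522483925045872153214390079813291982556252117239/30327587040541309748486012287050102975322210406400)*y^8*z^3 - (35772673640008498712853819556285423743802182396743663/126364946002255457285358384529375429063842543360)*y^7*z^5 - (21758379831864966999683081223107153525/8649650698294230814240074595470864)*y^6*z^7 + (80408330126077892839051861809384713691616602731451847/454913805608119646227290184305751544629833156096)*y^6 + (25385569594232173157029384230316780557781352718632785/7776304369369566602175900586423103327005694976)*y^5*z^2 + (3581684720585911515484670311751812747900326932501504011/10109195680180436582828670762350034325107403468800)*y^4*z^4 + (6866103317557679375598552262403133023580778119538627/129605072822826110036265009773718388783428249600)*y^3*z^6 + (166512255192263141052853660172532783261/1441608449715705135706679099245144)*y^2*z^8 - (2457112321195918062256501280628496517575994680268978201/7581896760135327437121503071762525743830552601600)*y^2*z + (195819200557192608073830655536190602731/2883216899431410271413358198490288)*y*z^10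 - (1417501504139131704118598432854599414105885187181832611/1684865946696739430471445127058339054184567244800)*y*z^3 - (1251534033401784545675720045509297767/180201056214463141963334887405643)*z^12 + (15462526052160585803068057342983628818572895438130470461/8424329733483697152357225635291695270922836224000)*z^5) * h1 + ((88/49)*x^12 + (508/147)*x^9*z^2 - (11080/441)*x^7*z + (26/441)*x^6*z^4 + (27055651450516215294908860248634494135/11532867597725641085653432793961152)*x^5*z^7 - (2834362832598196054021860437297326215125257690507/4387671736189425600186055018381091286938977200)*x^5 - (41011738326885222898332572380614834445625353208230871/6065517408108261949697202457410020595064442081280)*x^4*y^8*z - (30503190561702082329045498501402534096001502944673/2808109911161232384119075211763898423640945408)*x^4*y^7*z^3 + (984762234843645405973911654919751065030991049134959/123786069553229835708106172600204501940090654720)*x^4*y^5 + (9375490626126951810648909846301896230445774861308117/404367827207217463313146830494001373004296138752)*x^4*y^4*z^2 - (197903145795084245715855657612515152353893818754028301/21662562171815221248918580205035787839515864576000)*x^4*y^3*z^4 + (3293098260511019833980070221485280788622649203257/936036637053744128039691737254632807880315136)*x^4*y^2*z^6 - (6386040639288877421143183348306394795/1441608449715705135706679099245144)*x^4*y*z^8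 - (3118699451146348718810738362336446933869728731037013/151637935202706548742430061435250514876611052032)*x^4*y*z - (46353112348214242432434075759603621/102972032122550366836191364231796)*x^4*z^10 - (3104073205306117858287050105879919776000555135777197/36001409117451697232295836048255107995396736000)*x^4*z^3 + (132998335011757216962333870933759142176099752096203/173300497374521769991348641640286302716126916608)*x^3*y^10 - (152515952808510411645227492507012670480007514723365/33697318933934788609428902541166781083691344896)*x^3*y^9*z^2 + (54898207004972678713189320695002972981453209391855417/1213103481621652389939440491482004119012888416256)*x^3*y^6*z - (3828465977988911562046809204832565699178094886936805193/75818967601353274371215030717625257438305526016000)*x^3*y^5*z^3 - (556968785004193585693861110729318762073476105169021/24069513524239134721020644672261986488350960640)*x^3*y^4*z^5 + (13121698316705014181036473596144440371/17299301396588461628480149190941728)*x^3*y^3*z^7 - (475852162552482928570162594204415735712290740347983/129975373030891327493511481230214727037095187456)*x^3*y^3 + (8791640308711301314684996369071486783/1441608449715705135706679099245144)*x^3*y^2*z^9 + (1581070252230995698983929073791855280919753049062941887/5054597840090218291414335381175017162553701734400)*x^3*y^2*z^2 + (742692710964091650649314667674664394676721035810631/7404196054819655700313967843518091546709524025)*x^3*y*z^4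 + (1087422149958803643453766223054820705191040824565649/2808109911161232384119075211763898423640945408000)*x^3*z^6 - (3449314061205479883791551462941530836128449550755909/606551740810826194969720245741002059506444208128)*x^2*y^11*z + (336355133756680270696894846176067521241728346338061/173300497374521769991348641640286302716126916608)*x^2*y^8 + (153547725706983864636607882866608926454499880751960981/10109195680180436582828670762350034325107403468800)*x^2*y^7*z^2 - (90279773479840442465274214853958158280739367166613141/3159123650056386432133959613234385726596063584000)*x^2*y^6*z^4 - (14492084781422388075707576236759854733737110419321/601737838105978368025516116806549662208774016)*x^2*y^5*z^6 - (6168324256481604315042566130188611119/1441608449715705135706679099245144)*x^2*y^4*z^8 - (20238623310223050540125981215538673671180332711415435/93315652432434799226110807037077239924068339712)*x^2*y^4*z + (148291478433747511705646698230726305296950494165327531/2406951352423913472102064467226198648835096064000)*x^2*y^3*z^3 + (164733840098888869311492684336063774480939837046619687/4212164866741848576178612817645847635461418112000)*x^2*y^2*z^5 - (41146833863401787786947675442027453033118095498633477/3032758704054130974848601228705010297532221040640)*x^2*y*z^7 + (10090035749400406323539902200601070630908612961769169/1137284514020299115568225460764378861574582890240)*x^2*y + (343730404239621984736210039174930419121/34598602793176923256960298381883456)*x^2*z^9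 + (199210170211371776713094046404767574177797661085867083/2106082433370924288089306408822923817730709056000)*x^2*z^2 + (132998335011757216962333870933759142176099752096203/303275870405413097484860122870501029753222104064)*x*y^13 + (5092622521654859233767983255655373097616782567538539/94773709501691592964018788397031571797881907520)*x*y^9*z + (9296123387124482012261856726929059518064040504975561899/50545978400902182914143353811750171625537017344000)*x*y^8*z^3 + (7319102242749589020703545973114685380665068276533/173578222530570683084283495232658556406377120)*x*y^7*z^5 + (870335193274598679987323248924286141/2162412674573557703560018648867716)*x*y^6*z^7 - (23760449022855366700513254994550662364467530525972517/454913805608119646227290184305751544629833156096)*x*y^6 - (10187217425246742638643629635226465837624277513277136261/16848659466967394304714451270583390541845672448000)*x*y^5*z^2 + (3780664372034773025117432054726219257872516755751312757/30327587040541309748486012287050102975322210406400)*x*y^4*z^4 + (7133634514986508862323860912728668138639052249571576583/151637935202706548742430061435250514876611052032000)*x*y^3*z^6 - (154198684799119519194181085462909051211901066853105/25272989200451091457071676905875085812768508672)*x*y^2*z^8 + (144191457255313159463140725134434551645687274449492209/1516379352027065487424300614352505148766110520320)*x*y^2*z - (28690094016420633387890486561447173325/1081206337286778851780009324433858)*x*y*z^10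 - (2220360984539262035697428511159994023045950144171018159/9098276112162392924545803686115030892596663121920)*x*y*z^3 + (417178011133928181891906681836432589/360402112428926283926669774811286)*x*z^12 - (3824253435561526930659898464012648025154005006956506629/8424329733483697152357225635291695270922836224000)*x*z^5 - (133017197650927232937298915683869649528776337338827/57766832458173923330449547213428767572042305536)*y^11 + (208203240181071447839456483710190037043822515452841797/5054597840090218291414335381175017162553701734400)*y^10*z^2 + (30503190561702082329045498501402534096001502944673/1170045796317180160049614671568291009850393920)*y^9*z^4 - (4881591460431901190125348241898504211790863807183262291/30327587040541309748486012287050102975322210406400)*y^7*z + (15623119373933562091749701016151487993967043654118723/505459784009021829141433538117501716255370173440)*y^6*z^3 + (519679630562007085744689899078760859602680087197729157/2527298920045109145707167690587508581276850867200)*y^5*z^5 + (173593582210123322814580402267059363600311742728141/3510137388951540480148844014704873029551181760)*y^4*z^7 + (864204222566048306238237573981906061992236512663/54845896702367820002325687729763641086737215)*y^4 + (36642495654538215339618688094732663367/2883216899431410271413358198490288)*y^3*z^9 - (27307296513266404793376061584143542206783386107849705/101091956801804365828286707623500343251074034688)*y^3*z^2 - (139059337044642727297302227278810863/360402112428926283926669774811286)*y^2*z^11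 - (1090947784738321628792633164433736646703175309831851141/2166256217181522124891858020503578783951586457600)*y^2*z^4 + (333086772286463303254114888144780519661145057532177/5616219822322464768238150423527796847281890816)*y*z^6 + (781224519027292831450453974004396708029214493204269/240695135242391347210206446722619864883509606400)*z^8 - (3938720407327492687611546805588731601508094099807/365639311349118800015504584865090940578248100)*z) * h2 + ((16/49)*x^14 + (4817/49)*x^7 - (880709134616070606216247439432468799/720804224857852567853339549622572)*x^3*y*z^10 + (16949788081997007982793393702761724079/1441608449715705135706679099245144)*x^2*y^3*z^9 - (81166954351548645884726580745903482405/5766433798862820542826716396980576)*x^2*z^8 + (46750148532865542808811728955186697468457942971563/6581507604284138400279082527571636930408465800)*x^2*z - (354683756175638737915745426021374739619752798512411/46657826216217399613055403518538619962034169856)*x*y^12*z - (18380618875271351358717148942021624230887655705209/6665403745173914230436486216934088566004881408)*x*y^9 + (105092298056368934154011154910197188655235337812157681/1010919568018043658282867076235003432510740346880)*x*y^8*z^2 - (2583066562562523648447835091579429111747254569941762059/37909483800676637185607515358812628719152763008000)*x*y^7*z^4 - (50769827822404060623753457051749844180887498298121/1053041216685462144044653204411461908865354528)*x*y^6*z^6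 - (16726313431115908807587400198857957009/2883216899431410271413358198490288)*x*y^5*z^8 - (621116373594268257516964563334072467887772217716268313/1010919568018043658282867076235003432510740346880)*x*y^5*z + (2381430808057234015957210554849809521850929641079913749/5832228277027174951631925439817327495254271232000)*x*y^4*z^3 - (1509753519226293533204417792113978996991118835097599921/12636494600225545728535838452937542906384254336000)*x*y^3*z^5 - (60126370847946365280797617323129587261560317185236075/606551740810826194969720245741002059506444208128)*x*y^2*z^7 + (614344931851179526411638579306405938714279387254997/40617304072153539841722337884442102199092246080)*x*y^2 + (61993245839916192388463597591865618571/34598602793176923256960298381883456)*x*y*z^9 - (558003893379010544350498613950964286708079893546338273/3159123650056386432133959613234385726596063584000)*x*y*z^2 + (4588958122473210000810973500200758479/720804224857852567853339549622572)*x*z^11 + (83796960197062635760114284429544958697050775429760319/162006341028532637545331262217147985979285312000)*x*z^4 + (664991675058786084811669354668795710880498760481015/1213103481621652389939440491482004119012888416256)*y^14 + (7657171732364279081723732390181258645937228818319/193415733676921618293915894687819534281391648)*y^10*z + (3223475188636086284638091125183990101622072548934314271/15163793520270654874243006143525051487661105203200)*y^9*z^3 + (9131141476399994677492912214147968958181333870163543/126364946002255457285358384529375429063842543360)*y^8*z^5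 + (4351675966372993399936616244621430705/8649650698294230814240074595470864)*y^7*z^7 - (126977311511322945407473012557398784322523982519853735/3639310444864957169818321474446012357038665248768)*y^7 - (483453512362806569414659247360612420499978551629046669/561621982232246476823815042352779684728189081600)*y^6*z^2 - (81505559036435709791086989758075663108385544024254585169/151637935202706548742430061435250514876611052032000)*y^5*z^4 - (6130064431271657967682646272659197888152082487248718541/30327587040541309748486012287050102975322210406400)*y^4*z^6 - (1299224989070333998229295393972942099976018060271/25349036309379229144505192483325060995755776)*y^3*z^8 + (181568031771115278662671174744259798377954655110497491/947737095016915929640187883970315717978819075200)*y^3*z - (55886704122519770632921370995816998283/8649650698294230814240074595470864)*y^2*z^10 + (1050249954570041627418424011785612250809293460371043483/710802821262686947230140912977736788484114306400)*y^2*z^3 + (417178011133928181891906681836432589/360402112428926283926669774811286)*y*z^12 - (1057729493025602052172810028364448840925377335664647707/6318247300112772864267919226468771453192127168000)*y*z^5 + (29750626600374765796526175495635985522286001403461159/4212164866741848576178612817645847635461418112000)*z^7 - (3938354768016143568811531301003866510567515851707/1096917934047356400046513754595272821734744300)) * h3 + (-(94135502479050990293660743782173/128661431223511495422146644188)*y^3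 - (233308499624797232845014319777361135671/2883216899431410271413358198490288)*y^2*z^9 + (453567022957574270620669255793876147/8405880173269417700913580753616)*y^2*z^2 - (165782383755549778977613374443967456323/8649650698294230814240074595470864)*y*z^11 - (132400251522297477652740476584927221227/176523483638657771719185195825936)*y*z^4 + (417178011133928181891906681836432589/180201056214463141963334887405643)*z^13 - (15904065223401894489924992974477942846/25743008030637591709047841057949)*z^6) * h4

theorem kl_backward (u v w : ℂ) (hu : (u^21 + 289*u^14 - 57*u^7 - 1) = 0)
    (hv : v = (-(9/98)*u^17 - (1301/49)*u^10 + (213/98)*u^3)) (hw : w = ((16/49)*u^19 + (4625/49)*u^12 - (626/49)*u^5)) :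
    (-u^5*v + 3*u^3*w + 5*u^2*v^2 + 3*u*v^3*w - u - v^5 + 3*v*w + w^3) = 0
    ∧ (-5*u^4*v + 9*u^2*w + 10*u*v^2 + 3*v^3*w - 1) = 0
    ∧ (-u^5 + 10*u^2*v + 9*u*v^2*w - 5*v^4 + 3*w) = 0
    ∧ (3*u^3 + 3*u*v^3 + 3*v + 3*w^2) = 0 := by
  subst hv; subst hw
  refine ⟨?_, ?_, ?_, ?_⟩
  · linear_combination ((59049/9039207968)*u^64 + (9756207/1291315424)*u^57 + (604264455/184473632)*u^50 + (814333005657/1291315424)*u^43 + (58582369659965/1291315424)*u^36 - (36116428579867/1291315424)*u^29 + (9791686597195/1291315424)*u^22 - (9137673836251/9039207968)*u^15 + (414717/9604)*u^8 + u) * hu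
  · linear_combination (-(4374/5764801)*u^49 - (30351915/46118408)*u^42 - (8773849449/46118408)*u^35 - (844704436845/46118408)*u^28 + (155299232283/46118408)*u^21 - (8697642633/23059204)*u^14 + (51879/2401)*u^7 + 1) * hu
  · linear_combination (-(32805/92236816)*u^47 - (28456515/92236816)*u^40 - (4112313543/46118408)*u^33 - (395507483811/46118408)*u^26 + (294265179967/92236816)*u^19 - (33726233395/92236816)*u^12 + (862/49)*u^5) * hu
  · linear_combination (-(2187/941192)*u^31 - (1264815/941192)*u^24 - (182539515/941192)*u^17 + (95882181/941192)*u^10 - (933/98)*u^3) * hu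

theorem kl_hess (u v w : ℂ) (hu : (u^21 + 289*u^14 - 57*u^7 - 1) = 0)
    (hv : v = (-(9/98)*u^17 - (1301/49)*u^10 + (213/98)*u^3)) (hw : w = ((16/49)*u^19 + (4625/49)*u^12 - (626/49)*u^5)) :
    (-20*u^3*v + 18*u*w + 10*v^2) * (10*u^2 + 18*u*v*w - 20*v^3) * (6*w) - (-20*u^3*v + 18*u*w + 10*v^2) * (9*u*v^2 + 3) * (9*u*v^2 + 3) - (-5*u^4 + 20*u*v + 9*v^2*w) * (-5*u^4 + 20*u*v + 9*v^2*w) * (6*w) + (-5*u^4 + 20*u*v + 9*v^2*w) * (9*u*v^2 + 3) * (9*u^2 + 3*v^3) + (9*u^2 + 3*v^3) * (-5*u^4 + 20*u*v + 9*v^2*w) * (9*u*v^2 + 3) - (9*u^2 + 3*v^3) * (10*u^2 + 18*u*v*w - 20*v^3) * (9*u^2 + 3*v^3) ≠ 0 := by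
  subst hv; subst hw
  intro h
  have contra : (1:ℂ) = 0 := by linear_combination (-(17/235298)*u^15 - (19651/941192)*u^8 + (3125/705894)*u) * h + (-(296376674085/49044795233425002086656)*u^147 - (3084670989954675/196179180933700008346624)*u^140 - (3567055502230800327/196179180933700008346624)*u^133 - (2406008971512998683173/196179180933700008346624)*u^126 - (149023717489692806069619/28025597276242858335232)*u^119 - (43067262394300995753065901/28025597276242858335232)*u^112 - (8295069331778445667336857885/28025597276242858335232)*u^105 - (7185376197621862448202885906441/196179180933700008346624)*u^98 - (517914155844679348090989355653585/196179180933700008346624)*u^91 - (16493534672666426671765177156495797/196179180933700008346624)*u^84 + (8439403889921269285491386637908619/196179180933700008346624)*u^77 - (592447317633088047633778660027257/28025597276242858335232)*u^70 + (293627717332649071092318238936167/28025597276242858335232)*u^63 - (86089863029801937420754604732031/28025597276242858335232)*u^56 + (107718690686921155970200361587975/196179180933700008346624)*u^49 - (14502445686795024303718752445315/196179180933700008346624)*u^42 + (1771069171741142818619648351353/196179180933700008346624)*u^35 - (45352723478810354197473634265/49044795233425002086656)*u^28 + (1695119499893685361129/26054617566567184)*u^21 - (30653530034863473/10851569165584)*u^14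 + (80926472397/1129900996)*u^7 - 1) * hu
  exact one_ne_zero contra


set_option maxHeartbeats 1000000 in
/-- In the affine chart `x₃ = 1`, the `PSL₂(𝔽₇)`-invariant double Veronese cone
`z² + y³ + 3φ₄·y + φ₆ = 0` has exactly `21` singular points, all of them nodes:
the polynomial `g = w³ + 3w·φ₄(u,v,1) + φ₆(u,v,1)` (variables u = X 0, v = X 1, w = X 2)
has exactly `21` critical zeros, at each of which its Hessian is nondegenerate. -/
theorem stmt_8 :
    let φ₄ : MvPolynomial (Fin 3) ℂ := X 0 ^ 3 * X 2 + X 1 ^ 3 * X 0 + X 2 ^ 3 * X 1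
    let φ₆ : MvPolynomial (Fin 3) ℂ :=
      5 * X 0 ^ 2 * X 1 ^ 2 * X 2 ^ 2 - X 0 ^ 5 * X 1 - X 1 ^ 5 * X 2 - X 2 ^ 5 * X 0
    let g : MvPolynomial (Fin 3) ℂ :=
      X 2 ^ 3 + 3 * X 2 * aeval ![X 0, X 1, 1] φ₄ + aeval ![X 0, X 1, 1] φ₆
    let S : Set (Fin 3 → ℂ) :=
      {p | eval p g = 0 ∧ ∀ i : Fin 3, eval p (pderiv i g) = 0}
    S.Finite ∧ S.ncard = 21 ∧
    ∀ p ∈ S, (Matrix.of fun i j : Fin 3 => eval p (pderiv i (pderiv j g))).det ≠ 0 := by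
  intro φ₄ φ₆ g S
  have hgpoly : g = (-(X 0 : MvPolynomial (Fin 3) ℂ)^5*X 1 + 3*(X 0 : MvPolynomial (Fin 3) ℂ)^3*X 2 + 5*(X 0 : MvPolynomial (Fin 3) ℂ)^2*X 1^2 + 3*(X 0 : MvPolynomial (Fin 3) ℂ)*X 1^3*X 2 - (X 0 : MvPolynomial (Fin 3) ℂ) - X 1^5 + 3*X 1*X 2 + X 2^3) := by
    show X 2 ^ 3 + 3 * X 2 * aeval ![X 0, X 1, 1] φ₄ + aeval ![X 0, X 1, 1] φ₆ = _
    simp only [φ₄, φ₆, map_add, map_sub, map_mul, map_pow, aeval_X, map_ofNat,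
      Matrix.cons_val_zero, Matrix.cons_val_one, Matrix.head_cons, Matrix.cons_val_two, Matrix.tail_cons]
    norm_num
    try ring
  have hpd0 : pderiv 0 g = (-5*(X 0 : MvPolynomial (Fin 3) ℂ)^4*X 1 + 9*(X 0 : MvPolynomial (Fin 3) ℂ)^2*X 2 + 10*(X 0 : MvPolynomial (Fin 3) ℂ)*X 1^2 + 3*X 1^3*X 2 - 1) := by
    rw [hgpoly]
    simp [pderiv_mul, pderiv_pow, pderiv_X, pd_ofNat', Pi.single_apply]
    try ring
  have hpd1 : pderiv 1 g = (-(X 0 : MvPolynomial (Fin 3) ℂ)^5 + 10*(X 0 : MvPolynomial (Fin 3) ℂ)^2*X 1 + 9*(X 0 : MvPolynomial (Fin 3) ℂ)*X 1^2*X 2 - 5*X 1^4 + 3*X 2) := by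
    rw [hgpoly]
    simp [pderiv_mul, pderiv_pow, pderiv_X, pd_ofNat', Pi.single_apply]
    try ring
  have hpd2 : pderiv 2 g = (3*(X 0 : MvPolynomial (Fin 3) ℂ)^3 + 3*(X 0 : MvPolynomial (Fin 3) ℂ)*X 1^3 + 3*X 1 + 3*X 2^2) := by
    rw [hgpoly]
    simp [pderiv_mul, pderiv_pow, pderiv_X, pd_ofNat', Pi.single_apply]
    try ring
  have hpd00 : pderiv 0 (pderiv 0 g) = (-20*(X 0 : MvPolynomial (Fin 3) ℂ)^3*X 1 + 18*(X 0 : MvPolynomial (Fin 3) ℂ)*X 2 + 10*X 1^2) := by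
    rw [hpd0]
    simp [pderiv_mul, pderiv_pow, pderiv_X, pd_ofNat', Pi.single_apply]
    try ring
  have hpd01 : pderiv 0 (pderiv 1 g) = (-5*(X 0 : MvPolynomial (Fin 3) ℂ)^4 + 20*(X 0 : MvPolynomial (Fin 3) ℂ)*X 1 + 9*X 1^2*X 2) := by
    rw [hpd1]
    simp [pderiv_mul, pderiv_pow, pderiv_X, pd_ofNat', Pi.single_apply]
    try ring
  have hpd02 : pderiv 0 (pderiv 2 g) = (9*(X 0 : MvPolynomial (Fin 3) ℂ)^2 + 3*X 1^3) := by
    rw [hpd2]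
    simp [pderiv_mul, pderiv_pow, pderiv_X, pd_ofNat', Pi.single_apply]
    try ring
  have hpd10 : pderiv 1 (pderiv 0 g) = (-5*(X 0 : MvPolynomial (Fin 3) ℂ)^4 + 20*(X 0 : MvPolynomial (Fin 3) ℂ)*X 1 + 9*X 1^2*X 2) := by
    rw [hpd0]
    simp [pderiv_mul, pderiv_pow, pderiv_X, pd_ofNat', Pi.single_apply]
    try ring
  have hpd11 : pderiv 1 (pderiv 1 g) = (10*(X 0 : MvPolynomial (Fin 3) ℂ)^2 + 18*(X 0 : MvPolynomial (Fin 3) ℂ)*X 1*X 2 - 20*X 1^3) := by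
    rw [hpd1]
    simp [pderiv_mul, pderiv_pow, pderiv_X, pd_ofNat', Pi.single_apply]
    try ring
  have hpd12 : pderiv 1 (pderiv 2 g) = (9*(X 0 : MvPolynomial (Fin 3) ℂ)*X 1^2 + 3) := by
    rw [hpd2]
    simp [pderiv_mul, pderiv_pow, pderiv_X, pd_ofNat', Pi.single_apply]
    try ring
  have hpd20 : pderiv 2 (pderiv 0 g) = (9*(X 0 : MvPolynomial (Fin 3) ℂ)^2 + 3*X 1^3) := by
    rw [hpd0]
    simp [pderiv_mul, pderiv_pow, pderiv_X, pd_ofNat', Pi.single_apply]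
    try ring
  have hpd21 : pderiv 2 (pderiv 1 g) = (9*(X 0 : MvPolynomial (Fin 3) ℂ)*X 1^2 + 3) := by
    rw [hpd1]
    simp [pderiv_mul, pderiv_pow, pderiv_X, pd_ofNat', Pi.single_apply]
    try ring
  have hpd22 : pderiv 2 (pderiv 2 g) = (6*X 2) := by
    rw [hpd2]
    simp [pderiv_mul, pderiv_pow, pderiv_X, pd_ofNat', Pi.single_apply]
    try ring
  have hev : ∀ q : Fin 3 → ℂ, eval q g = (-(q 0)^5*(q 1) + 3*(q 0)^3*(q 2) + 5*(q 0)^2*(q 1)^2 + 3*(q 0)*(q 1)^3*(q 2) - (q 0) - (q 1)^5 + 3*(q 1)*(q 2) + (q 2)^3) := by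
    intro q; rw [hgpoly]; simp; try ring
  have hev0 : ∀ q : Fin 3 → ℂ, eval q (pderiv 0 g) = (-5*(q 0)^4*(q 1) + 9*(q 0)^2*(q 2) + 10*(q 0)*(q 1)^2 + 3*(q 1)^3*(q 2) - 1) := by
    intro q; rw [hpd0]; simp; try ring
  have hev1 : ∀ q : Fin 3 → ℂ, eval q (pderiv 1 g) = (-(q 0)^5 + 10*(q 0)^2*(q 1) + 9*(q 0)*(q 1)^2*(q 2) - 5*(q 1)^4 + 3*(q 2)) := by
    intro q; rw [hpd1]; simp; try ring
  have hev2 : ∀ q : Fin 3 → ℂ, eval q (pderiv 2 g) = (3*(q 0)^3 + 3*(q 0)*(q 1)^3 + 3*(q 1) + 3*(q 2)^2) := by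
    intro q; rw [hpd2]; simp; try ring
  have hev00 : ∀ q : Fin 3 → ℂ, eval q (pderiv 0 (pderiv 0 g)) = (-20*(q 0)^3*(q 1) + 18*(q 0)*(q 2) + 10*(q 1)^2) := by
    intro q; rw [hpd00]; simp; try ring
  have hev01 : ∀ q : Fin 3 → ℂ, eval q (pderiv 0 (pderiv 1 g)) = (-5*(q 0)^4 + 20*(q 0)*(q 1) + 9*(q 1)^2*(q 2)) := by
    intro q; rw [hpd01]; simp; try ring
  have hev02 : ∀ q : Fin 3 → ℂ, eval q (pderiv 0 (pderiv 2 g)) = (9*(q 0)^2 + 3*(q 1)^3) := by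
    intro q; rw [hpd02]; simp; try ring
  have hev10 : ∀ q : Fin 3 → ℂ, eval q (pderiv 1 (pderiv 0 g)) = (-5*(q 0)^4 + 20*(q 0)*(q 1) + 9*(q 1)^2*(q 2)) := by
    intro q; rw [hpd10]; simp; try ring
  have hev11 : ∀ q : Fin 3 → ℂ, eval q (pderiv 1 (pderiv 1 g)) = (10*(q 0)^2 + 18*(q 0)*(q 1)*(q 2) - 20*(q 1)^3) := by
    intro q; rw [hpd11]; simp; try ring
  have hev12 : ∀ q : Fin 3 → ℂ, eval q (pderiv 1 (pderiv 2 g)) = (9*(q 0)*(q 1)^2 + 3) := by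
    intro q; rw [hpd12]; simp; try ring
  have hev20 : ∀ q : Fin 3 → ℂ, eval q (pderiv 2 (pderiv 0 g)) = (9*(q 0)^2 + 3*(q 1)^3) := by
    intro q; rw [hpd20]; simp; try ring
  have hev21 : ∀ q : Fin 3 → ℂ, eval q (pderiv 2 (pderiv 1 g)) = (9*(q 0)*(q 1)^2 + 3) := by
    intro q; rw [hpd21]; simp; try ring
  have hev22 : ∀ q : Fin 3 → ℂ, eval q (pderiv 2 (pderiv 2 g)) = (6*(q 2)) := by
    intro q; rw [hpd22]; simp; try ring

  have hmem : ∀ q : Fin 3 → ℂ, q ∈ S ↔ ((-(q 0)^5*(q 1) + 3*(q 0)^3*(q 2) + 5*(q 0)^2*(q 1)^2 + 3*(q 0)*(q 1)^3*(q 2) - (q 0) - (q 1)^5 + 3*(q 1)*(q 2) + (q 2)^3) = 0 ∧ (-5*(q 0)^4*(q 1) + 9*(q 0)^2*(q 2) + 10*(q 0)*(q 1)^2 + 3*(q 1)^3*(q 2) - 1) = 0 ∧ (-(q 0)^5 + 10*(q 0)^2*(q 1) + 9*(q 0)*(q 1)^2*(q 2) - 5*(q 1)^4 + 3*(q 2))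 = 0 ∧ (3*(q 0)^3 + 3*(q 0)*(q 1)^3 + 3*(q 1) + 3*(q 2)^2) = 0) := by
    intro q
    constructor
    · rintro ⟨ha, hb⟩
      have hb0 := hb 0
      have hb1 := hb 1
      have hb2 := hb 2
      rw [hev q] at ha
      rw [hev0 q] at hb0
      rw [hev1 q] at hb1
      rw [hev2 q] at hb2
      exact ⟨ha, hb0, hb1, hb2⟩
    · rintro ⟨ha, hb0, hb1, hb2⟩
      refine ⟨by rw [hev q]; exact ha, ?_⟩
      intro i
      fin_cases i
      · show (eval q) ((pderiv 0) g) = 0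
        rw [hev0 q]; exact hb0
      · show (eval q) ((pderiv 1) g) = 0
        rw [hev1 q]; exact hb1
      · show (eval q) ((pderiv 2) g) = 0
        rw [hev2 q]; exact hb2
  have haux : ∀ u : ℂ, u ∈ klPoly.rootSet ℂ → (u^21 + 289*u^14 - 57*u^7 - 1) = 0 := by
    intro u hu
    rw [Polynomial.mem_rootSet] at hu
    have h2 := hu.2
    simp only [klPoly, map_add, map_sub, map_mul, map_pow, map_ofNat, map_one,
      Polynomial.aeval_X] at h2
    linear_combination h2
  have hkey : S = (fun u : ℂ => ![u, (-(9/98)*u^17 - (1301/49)*u^10 + (213/98)*u^3), ((16/49)*u^19 + (4625/49)*u^12 - (626/49)*u^5)]) '' (klPoly.rootSet ℂ) := by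
    ext q
    constructor
    · intro hq
      obtain ⟨h1, h2, h3, h4⟩ := (hmem q).1 hq
      obtain ⟨hu, hv, hw⟩ := kl_forward (q 0) (q 1) (q 2) h1 h2 h3 h4
      refine ⟨q 0, ?_, ?_⟩
      · rw [Polynomial.mem_rootSet]
        refine ⟨klPoly_ne, ?_⟩
        simp only [klPoly, map_add, map_sub, map_mul, map_pow, map_ofNat, map_one,
          Polynomial.aeval_X]
        linear_combination hu
      · funext i
        fin_cases i
        · simp
        · simpa using hv.symm
        · simpa using hw.symm
    · rintro ⟨u, hu, rfl⟩
      have hu' := haux u hu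
      obtain ⟨e1, e2, e3, e4⟩ := kl_backward u _ _ hu' rfl rfl
      refine (hmem _).2 ⟨?_, ?_, ?_, ?_⟩
      · simpa using e1
      · simpa using e2
      · simpa using e3
      · simpa using e4
  have hinj : Set.InjOn (fun u : ℂ => ![u, (-(9/98)*u^17 - (1301/49)*u^10 + (213/98)*u^3), ((16/49)*u^19 + (4625/49)*u^12 - (626/49)*u^5)]) (klPoly.rootSet ℂ) := by
    intro a _ b _ hab
    simpa using congrFun hab 0
  refine ⟨?_, ?_, ?_⟩
  · rw [hkey]
    exact (klPoly.rootSet_finite ℂ).image _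
  · rw [hkey, Set.ncard_image_of_injOn hinj, klPoly_card]
  · intro q hq
    have hdetq : (Matrix.of fun i j : Fin 3 => eval q (pderiv i (pderiv j g))).det
        = (-20*(q 0)^3*(q 1) + 18*(q 0)*(q 2) + 10*(q 1)^2) * (10*(q 0)^2 + 18*(q 0)*(q 1)*(q 2) - 20*(q 1)^3) * (6*(q 2)) - (-20*(q 0)^3*(q 1) + 18*(q 0)*(q 2) + 10*(q 1)^2) * (9*(q 0)*(q 1)^2 + 3) * (9*(q 0)*(q 1)^2 + 3) - (-5*(q 0)^4 + 20*(q 0)*(q 1) + 9*(q 1)^2*(q 2)) * (-5*(q 0)^4 + 20*(q 0)*(q 1) + 9*(q 1)^2*(q 2)) * (6*(q 2)) + (-5*(q 0)^4 + 20*(q 0)*(q 1) + 9*(q 1)^2*(q 2)) * (9*(q 0)*(q 1)^2 + 3) * (9*(q 0)^2 + 3*(q 1)^3) + (9*(q 0)^2 + 3*(q 1)^3) * (-5*(q 0)^4 + 20*(q 0)*(q 1) + 9*(q 1)^2*(q 2)) * (9*(q 0)*(q 1)^2 + 3) - (9*(q 0)^2 + 3*(q 1)^3) * (10*(q 0)^2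 + 18*(q 0)*(q 1)*(q 2) - 20*(q 1)^3) * (9*(q 0)^2 + 3*(q 1)^3) := by
      rw [Matrix.det_fin_three]
      simp only [Matrix.of_apply]
      rw [hev00 q, hev01 q, hev02 q, hev10 q, hev11 q, hev12 q, hev20 q, hev21 q, hev22 q]
    rw [hkey] at hq
    obtain ⟨u, hu, rfl⟩ := hq
    have hu' := haux u hu
    rw [hdetq]
    beta_reduce
    have c0 : (![u, (-(9/98)*u^17 - (1301/49)*u^10 + (213/98)*u^3), ((16/49)*u^19 + (4625/49)*u^12 - (626/49)*u^5)] : Fin 3 → ℂ) 0 = u := rfl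
    have c1 : (![u, (-(9/98)*u^17 - (1301/49)*u^10 + (213/98)*u^3), ((16/49)*u^19 + (4625/49)*u^12 - (626/49)*u^5)] : Fin 3 → ℂ) 1 = (-(9/98)*u^17 - (1301/49)*u^10 + (213/98)*u^3) := rfl
    have c2 : (![u, (-(9/98)*u^17 - (1301/49)*u^10 + (213/98)*u^3), ((16/49)*u^19 + (4625/49)*u^12 - (626/49)*u^5)] : Fin 3 → ℂ) 2 = ((16/49)*u^19 + (4625/49)*u^12 - (626/49)*u^5) := rfl
    rw [c0, c1, c2]
    exact kl_hess u _ _ hu' rfl rfl
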